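/- Let (X, φ) be a size pair and let u < v. The inclusion-induced map ι_0^{u,v} : Ȟ_0(X_u) → Ȟ_0(X_v) is surjective if and only if ℓ_{(X,φ)}(u, v') = ℓ_{(X,φ)}(v, v') for every v' > v. Equivalently, ι_0^{u,v} is surjective iff every connected component of X_v contains a point of X_u. -/
import Mathlib


universe u v

/-- An abstract packaging of (degree-0) Čech homology with coefficients in a field `K`,
applied to the subspaces of a topological space `X`: absolute groups `Ȟ₀(S)`, relative
groups `Ȟ₀(T, S)`, inclusion-induced homomorphisms, together with the standard
properties of Čech homology on compact Hausdorff pairs with field coefficients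
(rank `Ȟ₀` = number of connected components, functoriality, exactness of the final part
of the homology sequence of a pair). -/
structure CechTheory (X : Type u) [TopologicalSpace X] (K : Type v) [Field K] where
  /-- the 0-th Čech homology group of a subspace -/
  H0 : Set X → Type v
  [h0Add : ∀ S : Set X, AddCommGroup (H0 S)]
  [h0Mod : ∀ S : Set X, Module K (H0 S)]
  /-- the relative 0-th Čech homology group `Ȟ₀(T, S)` -/
  H0rel : Set X → Set X → Type v
  [h0relAdd : ∀ T S : Set X, AddCommGroup (H0rel T S)]
  [h0relMod : ∀ T S : Set X, Module K (H0rel T S)]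
  /-- the homomorphism induced by an inclusion of subspaces -/
  map : ∀ {S T : Set X}, S ⊆ T → (H0 S →ₗ[K] H0 T)
  /-- the homomorphism induced by an inclusion of pairs -/
  maprel : ∀ {T S T' S' : Set X}, T ⊆ T' → S ⊆ S' → (H0rel T S →ₗ[K] H0rel T' S')
  /-- the natural map `Ȟ₀(T) → Ȟ₀(T, S)` -/
  quot : ∀ T S : Set X, H0 T →ₗ[K] H0rel T S
  map_comp : ∀ {S T U : Set X} (h₁ : S ⊆ T) (h₂ : T ⊆ U),
    (map h₂).comp (map h₁) = map (h₁.trans h₂)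
  /-- the homology class of a point -/
  cls : ∀ S : Set X, S → H0 S
  map_cls : ∀ {S T : Set X} (h : S ⊆ T) (x : S), map h (cls S x) = cls T ⟨x.1, h x.2⟩
  cls_eq_iff : ∀ S : Set X, IsCompact S → ∀ x y : S,
    (cls S x = cls S y ↔ connectedComponent x = connectedComponent y)
  cls_span : ∀ S : Set X, IsCompact S →
    Submodule.span K (Set.range (cls S)) = ⊤
  cls_indep : ∀ S : Set X, IsCompact S → ∀ f : ConnectedComponents ↥S → ↥S,
    (∀ c, ConnectedComponents.mk (f c) = c) →
    LinearIndependent K fun c => cls S (f c)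
  quot_surjective : ∀ T S : Set X, S ⊆ T → Function.Surjective (quot T S)
  exact_pair : ∀ {S T : Set X} (h : S ⊆ T),
    LinearMap.range (map h) = LinearMap.ker (quot T S)

attribute [instance] CechTheory.h0Add CechTheory.h0Mod CechTheory.h0relAdd
  CechTheory.h0relMod

/-- The size function of a size pair: `sizeFun φ u v` is the number of connected
components of the sublevel set `X_v = {φ ≤ v}` containing at least one point of
`X_u = {φ ≤ u}`. -/
noncomputable def sizeFun {X : Type u} [TopologicalSpace X] (φ : X → ℝ) (u v : ℝ) : ℕ :=
  Set.ncard {C : Set ↥{x : X | φ x ≤ v} |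
    ∃ p : ↥{x : X | φ x ≤ v}, φ (p : X) ≤ u ∧ C = connectedComponent p}


open Set

section Aux

variable {X : Type u} [TopologicalSpace X]

lemma aux_preconn_preimage {T s : Set X} (hsT : s ⊆ T) (hs : IsPreconnected s) :
    IsPreconnected ((Subtype.val ⁻¹' s) : Set ↥T) := by
  have himg : Subtype.val '' ((Subtype.val ⁻¹' s) : Set ↥T) = s := by
    rw [Subtype.image_preimage_coe]
    exact inter_eq_self_of_subset_right hsT
  rw [← Topology.IsInducing.subtypeVal.isPreconnected_image, himg]
  exact hs

lemma aux_comp_mono {S T : Set X} (h : S ⊆ T) {x y : ↥S}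
    (hxy : y ∈ connectedComponent x) :
    (⟨y.1, h y.2⟩ : ↥T) ∈ connectedComponent (⟨x.1, h x.2⟩ : ↥T) := by
  have hpre : IsPreconnected ((Subtype.val '' connectedComponent x) : Set X) :=
    isPreconnected_connectedComponent.image _ continuous_subtype_val.continuousOn
  have hsub : ((Subtype.val '' connectedComponent x) : Set X) ⊆ T := by
    rintro z ⟨w, -, rfl⟩; exact h w.2
  have h2 := aux_preconn_preimage hsub hpre
  exact h2.subset_connectedComponent ⟨x, mem_connectedComponent, rfl⟩ ⟨y, hxy, rfl⟩

end Aux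

section Aux2
variable {X : Type u} [TopologicalSpace X]

lemma aux_finite [CompactSpace X] [LocallyConnectedSpace X] {φ : X → ℝ} (hφ : Continuous φ)
    {w v' : ℝ} (hwv : w < v') :
    {C : Set ↥{x : X | φ x ≤ v'} |
      ∃ p : ↥{x : X | φ x ≤ v'}, φ (p : X) ≤ w ∧ C = connectedComponent p}.Finite := by
  set T := {x : X | φ x ≤ v'} with hT
  set S := {x : X | φ x ≤ w} with hS
  have hO : IsOpen {x : X | φ x < v'} := isOpen_lt hφ continuous_const
  have hScomp : IsCompact S := ((isClosed_le hφ continuous_const)).isCompact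
  have hcov : S ⊆ ⋃ x : ↥S, connectedComponentIn {x : X | φ x < v'} (x : X) := by
    intro y hy
    exact mem_iUnion.mpr ⟨⟨y, hy⟩, mem_connectedComponentIn (lt_of_le_of_lt hy hwv)⟩
  obtain ⟨t, ht⟩ := hScomp.elim_finite_subcover _
    (fun x : ↥S => hO.connectedComponentIn) hcov
  have hsub : ∀ x : X, x ∈ S → x ∈ T := fun x hx => le_trans hx hwv.le
  refine Finite.subset (t.finite_toSet.image
    (fun x : ↥S => connectedComponent (⟨(x : X), hsub _ x.2⟩ : ↥T))) ?_
  rintro C ⟨p, hp, rfl⟩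
  have hpS : (p : X) ∈ S := hp
  obtain ⟨x, hxt, hpx⟩ : ∃ x ∈ t, (p : X) ∈ connectedComponentIn {x : X | φ x < v'} (x : X) := by
    have := ht hpS
    simpa using this
  -- the connected open set N lies in T and contains both p and x
  set N := connectedComponentIn {x : X | φ x < v'} (x : X) with hN
  have hNT : N ⊆ T := fun z hz => show φ z ≤ v' from le_of_lt (show φ z < v' from connectedComponentIn_subset {x : X | φ x < v'} (x : X) hz)
  have hpre := aux_preconn_preimage hNT (isPreconnected_connectedComponentIn)
  have hxN : (x : X) ∈ N := mem_connectedComponentIn (lt_of_le_of_lt x.2 hwv)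
  have hmem : (⟨(x : X), hsub _ x.2⟩ : ↥T) ∈ connectedComponent p := by
    exact (hpre.subset_connectedComponent (show p ∈ _ from hpx) hxN)
  exact ⟨x, hxt, (connectedComponent_eq hmem).symm⟩

end Aux2

section Aux3
variable {X : Type u} [TopologicalSpace X]

lemma aux_limit [CompactSpace X] [T2Space X] {φ : X → ℝ}
    (hφ : Continuous φ) {u v : ℝ} (huv : u < v) (p : X) (hp : φ p ≤ v)
    (hyp : ∀ v', (h : v < v') → ∃ q, φ q ≤ u ∧
      q ∈ (Subtype.val '' connectedComponent
        (⟨p, le_trans hp h.le⟩ : ↥{x : X | φ x ≤ v'}))) :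
    ∃ q : ↥{x : X | φ x ≤ v}, φ (q : X) ≤ u ∧
      q ∈ connectedComponent (⟨p, hp⟩ : ↥{x : X | φ x ≤ v}) := by
  set V := {x : X | φ x ≤ v} with hV
  have hVclosed : IsClosed V := isClosed_le hφ continuous_const
  have hVcomp : IsCompact V := hVclosed.isCompact
  haveI : CompactSpace ↥V := isCompact_iff_compactSpace.mp hVcomp
  set p' : ↥V := ⟨p, hp⟩ with hp'
  -- Step B : every clopen set of V containing p' contains a point of {φ ≤ u}
  have stepB : ∀ A : Set ↥V, IsClopen A → p' ∈ A → ∃ q : ↥V, φ (q : X) ≤ u ∧ q ∈ A := by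
    intro A hA hpA
    set A' := (Subtype.val '' A : Set X) with hA'
    set B' := (Subtype.val '' Aᶜ : Set X) with hB'
    have hAcomp : IsCompact A' := (hA.isClosed.isCompact).image continuous_subtype_val
    have hBcomp : IsCompact B' := ((hA.compl).isClosed.isCompact).image continuous_subtype_val
    have hABdis : Disjoint A' B' := by
      rw [Set.disjoint_left]
      rintro z ⟨a, ha, rfl⟩ ⟨b, hb, hba⟩
      exact hb (Subtype.val_injective hba ▸ ha)
    obtain ⟨U, W, hU, hW, hAU, hBW, hUW⟩ :=
      normal_separation hAcomp.isClosed hBcomp.isClosed hABdis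
    have hVUW : V ⊆ U ∪ W := by
      intro z hz
      rcases Classical.em ((⟨z, hz⟩ : ↥V) ∈ A) with h | h
      · exact Or.inl (hAU ⟨⟨z, hz⟩, h, rfl⟩)
      · exact Or.inr (hBW ⟨⟨z, hz⟩, h, rfl⟩)
    -- find v' > v with {φ ≤ v'} ⊆ U ∪ W
    obtain ⟨v', hvv', hv'UW⟩ : ∃ v', v < v' ∧ {x : X | φ x ≤ v'} ⊆ U ∪ W := by
      set Kc := (U ∪ W)ᶜ with hKc
      rcases Kc.eq_empty_or_nonempty with hK | hK
      · exact ⟨v + 1, by linarith, fun z _ => by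
          by_contra hzz
          exact absurd (show z ∈ Kc from hzz) (by simp [hK])⟩
      · have hKcomp : IsCompact Kc := ((hU.union hW).isClosed_compl).isCompact
        obtain ⟨x0, hx0K, hx0min⟩ := hKcomp.exists_isMinOn hK hφ.continuousOn
        have hx0v : v < φ x0 := by
          by_contra hle
          exact hx0K (hVUW (show x0 ∈ V from not_lt.mp hle))
        refine ⟨(v + φ x0) / 2, by linarith, fun z hz => ?_⟩
        by_contra hzz
        have := hx0min (show z ∈ Kc from hzz)
        have hzle : φ z ≤ (v + φ x0) / 2 := hz
        simp only [isMinOn_iff] at *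
        linarith [hx0min z hzz]
    obtain ⟨q, hqu, hqD⟩ := hyp v' hvv'
    set D := (Subtype.val '' connectedComponent
      (⟨p, le_trans hp hvv'.le⟩ : ↥{x : X | φ x ≤ v'}) : Set X) with hD
    have hDpre : IsPreconnected D :=
      isPreconnected_connectedComponent.image _ continuous_subtype_val.continuousOn
    have hDsub : D ⊆ U ∪ W := by
      rintro z ⟨w', -, rfl⟩; exact hv'UW w'.2
    have hpD : p ∈ D := ⟨_, mem_connectedComponent, rfl⟩
    have hpU : p ∈ U := hAU ⟨p', hpA, rfl⟩
    have hDU : D ⊆ U :=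
      hDpre.subset_left_of_subset_union hU hW hUW hDsub ⟨p, hpD, hpU⟩
    have hqV : q ∈ V := show φ q ≤ v from le_trans hqu huv.le
    have hqU : q ∈ U := hDU hqD
    rcases hVUW hqV with _ | hqW
    · rcases Classical.em ((⟨q, hqV⟩ : ↥V) ∈ A) with h | h
      · exact ⟨⟨q, hqV⟩, hqu, h⟩
      · exact absurd (hBW ⟨⟨q, hqV⟩, h, rfl⟩) (fun hqW => hUW.ne_of_mem hqU hqW rfl)
    · exact absurd hqW (fun hqW => hUW.ne_of_mem hqU hqW rfl)
  -- Step C : directed intersection of clopens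
  have key : (⋂ Z : {Z : Set ↥V // IsClopen Z ∧ p' ∈ Z},
      ((Z : Set ↥V) ∩ {q : ↥V | φ (q : X) ≤ u})).Nonempty := by
    haveI : Nonempty {Z : Set ↥V // IsClopen Z ∧ p' ∈ Z} :=
      ⟨⟨Set.univ, isClopen_univ, Set.mem_univ _⟩⟩
    apply IsCompact.nonempty_iInter_of_directed_nonempty_isCompact_isClosed
    · rintro ⟨A, hA, hpA⟩ ⟨B, hB, hpB⟩
      exact ⟨⟨A ∩ B, hA.inter hB, ⟨hpA, hpB⟩⟩,
        fun z hz => ⟨hz.1.1, hz.2⟩, fun z hz => ⟨hz.1.2, hz.2⟩⟩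
    · rintro ⟨A, hA, hpA⟩
      obtain ⟨q, hqu, hqA⟩ := stepB A hA hpA
      exact ⟨q, hqA, hqu⟩
    · rintro ⟨A, hA, hpA⟩
      exact (hA.isClosed.inter (isClosed_le (hφ.comp continuous_subtype_val)
        continuous_const)).isCompact
    · rintro ⟨A, hA, hpA⟩
      exact hA.isClosed.inter (isClosed_le (hφ.comp continuous_subtype_val) continuous_const)
  obtain ⟨q, hq⟩ := key
  simp only [Set.mem_iInter, Set.mem_inter_iff] at hq
  refine ⟨q, (hq ⟨Set.univ, isClopen_univ, Set.mem_univ _⟩).2, ?_⟩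
  rw [connectedComponent_eq_iInter_isClopen p']
  exact Set.mem_iInter.mpr fun Z => (hq Z).1

end Aux3

section Aux4
variable {X : Type u} [TopologicalSpace X] {K : Type v} [Field K]

lemma aux_hom (𝓒 : CechTheory X K) {S T : Set X} (hST : S ⊆ T)
    (hS : IsCompact S) (hT : IsCompact T) :
    Function.Surjective (𝓒.map hST) ↔
      ∀ p : ↥T, ∃ q : ↥T, (q : X) ∈ S ∧ q ∈ connectedComponent p := by
  classical
  constructor
  · intro hsurj p
    by_contra hcon
    push_neg at hcon
    -- a section of ConnectedComponents.mk preferring points of S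
    set rep : ConnectedComponents ↥T → ↥T :=
      Function.surjInv ConnectedComponents.surjective_coe with hrep
    set f : ConnectedComponents ↥T → ↥T := fun c =>
      if h : ∃ x : ↥T, (x : X) ∈ S ∧ ConnectedComponents.mk x = c then h.choose
      else rep c with hf
    have sec : ∀ c, ConnectedComponents.mk (f c) = c := by
      intro c
      simp only [hf]
      split_ifs with h
      · exact h.choose_spec.2
      · exact Function.surjInv_eq ConnectedComponents.surjective_coe c
    have indep := 𝓒.cls_indep T hT f sec
    set T' : Set (ConnectedComponents ↥T) :=
      {c | ∃ x : ↥T, (x : X) ∈ S ∧ ConnectedComponents.mk x = c} with hT'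
    have hpT' : ConnectedComponents.mk p ∉ T' := by
      rintro ⟨x, hxS, hmk⟩
      have : connectedComponent x = connectedComponent p :=
        ConnectedComponents.coe_eq_coe.mp hmk
      exact hcon x hxS (this ▸ mem_connectedComponent)
    have hcls_f : ∀ x : ↥T, 𝓒.cls T (f (ConnectedComponents.mk x)) = 𝓒.cls T x := by
      intro x
      exact (𝓒.cls_eq_iff T hT _ _).mpr (ConnectedComponents.coe_eq_coe.mp (sec _))
    -- range of the induced map lies in the span of classes of components meeting S
    have hrange : LinearMap.range (𝓒.map hST) ≤
        Submodule.span K ((fun c => 𝓒.cls T (f c)) '' T') := by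
      rintro y ⟨a, rfl⟩
      have ha : a ∈ Submodule.span K (Set.range (𝓒.cls S)) := by
        rw [𝓒.cls_span S hS]; trivial
      have hmap : 𝓒.map hST a ∈
          Submodule.map (𝓒.map hST) (Submodule.span K (Set.range (𝓒.cls S))) := ⟨a, ha, rfl⟩
      rw [Submodule.map_span] at hmap
      refine Submodule.span_mono ?_ hmap
      rintro _ ⟨_, ⟨x, rfl⟩, rfl⟩
      refine ⟨ConnectedComponents.mk (⟨(x : X), hST x.2⟩ : ↥T),
        ⟨⟨(x : X), hST x.2⟩, x.2, rfl⟩, ?_⟩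
      simp only [hcls_f]
      exact (𝓒.map_cls hST x).symm
    have hmem : 𝓒.cls T (f (ConnectedComponents.mk p)) ∈
        Submodule.span K ((fun c => 𝓒.cls T (f c)) '' T') := by
      obtain ⟨a, ha⟩ := hsurj (𝓒.cls T (f (ConnectedComponents.mk p)))
      exact hrange ⟨a, ha⟩
    exact indep.notMem_span_image hpT' hmem
  · intro h
    rw [← LinearMap.range_eq_top, ← top_le_iff, ← 𝓒.cls_span T hT, Submodule.span_le]
    rintro _ ⟨x, rfl⟩
    obtain ⟨q, hqS, hqc⟩ := h x
    refine ⟨𝓒.cls S ⟨(q : X), hqS⟩, ?_⟩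
    rw [𝓒.map_cls]
    have : (⟨(q : X), hST hqS⟩ : ↥T) = q := Subtype.ext rfl
    rw [this]
    exact (𝓒.cls_eq_iff T hT q x).mpr (connectedComponent_eq hqc).symm

end Aux4

/-- Proposition 3.12: for a size pair `(X, φ)` and `u < v`, the
inclusion-induced map `ι₀^{u,v} : Ȟ₀(X_u) → Ȟ₀(X_v)` is surjective iff
`ℓ_{(X,φ)}(u, v') = ℓ_{(X,φ)}(v, v')` for every `v' > v`; equivalently, iff every
connected component of `X_v` contains a point of `X_u`. -/
theorem surjective_iff_sizeFun_eq {X : Type u} [TopologicalSpace X] [CompactSpace X]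
    [T2Space X] [LocallyConnectedSpace X] [Nonempty X] {K : Type v} [Field K]
    (C : CechTheory X K) {φ : X → ℝ} (hφ : Continuous φ) {u v : ℝ} (huv : u < v) :
    (Function.Surjective (C.map (show {x : X | φ x ≤ u} ⊆ {x : X | φ x ≤ v} from
        fun x hx => le_trans hx huv.le)) ↔
      ∀ v' > v, sizeFun φ u v' = sizeFun φ v v') ∧
    (Function.Surjective (C.map (show {x : X | φ x ≤ u} ⊆ {x : X | φ x ≤ v} from
        fun x hx => le_trans hx huv.le)) ↔
      ∀ p : ↥{x : X | φ x ≤ v}, ∃ q : ↥{x : X | φ x ≤ v},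
        φ (q : X) ≤ u ∧ q ∈ connectedComponent p) := by
  classical
  have hSu : IsCompact {x : X | φ x ≤ u} := (isClosed_le hφ continuous_const).isCompact
  have hSv : IsCompact {x : X | φ x ≤ v} := (isClosed_le hφ continuous_const).isCompact
  have hsub : {x : X | φ x ≤ u} ⊆ {x : X | φ x ≤ v} := fun x hx => le_trans hx huv.le
  have iff2 : Function.Surjective (C.map hsub) ↔
      ∀ p : ↥{x : X | φ x ≤ v}, ∃ q : ↥{x : X | φ x ≤ v},
        φ (q : X) ≤ u ∧ q ∈ connectedComponent p := aux_hom C hsub hSu hSv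
  -- the component condition is equivalent to the size-function condition
  have iff3 : (∀ p : ↥{x : X | φ x ≤ v}, ∃ q : ↥{x : X | φ x ≤ v},
        φ (q : X) ≤ u ∧ q ∈ connectedComponent p) ↔
      ∀ v' > v, sizeFun φ u v' = sizeFun φ v v' := by
    constructor
    · intro hcomp v' hv'
      unfold sizeFun
      congr 1
      ext D
      simp only [Set.mem_setOf_eq]
      constructor
      · rintro ⟨p, hpu, rfl⟩
        exact ⟨p, le_trans hpu huv.le, rfl⟩
      · rintro ⟨p, hpv, rfl⟩
        obtain ⟨q, hqu, hqc⟩ := hcomp ⟨(p : X), hpv⟩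
        have hsub' : {x : X | φ x ≤ v} ⊆ {x : X | φ x ≤ v'} := fun x hx => le_trans hx hv'.le
        have := aux_comp_mono hsub' hqc
        have hpeq : (⟨((⟨(p : X), hpv⟩ : ↥{x : X | φ x ≤ v}) : X),
            hsub' (Subtype.mem _)⟩ : ↥{x : X | φ x ≤ v'}) = p := Subtype.ext rfl
        rw [hpeq] at this
        exact ⟨⟨(q : X), le_trans hqu (le_of_lt (lt_trans huv hv'))⟩, hqu,
          connectedComponent_eq this⟩
    · intro hsz p
      have hyp : ∀ v', (h : v < v') → ∃ q, φ q ≤ u ∧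
          q ∈ (Subtype.val '' connectedComponent
            (⟨(p : X), le_trans p.2 h.le⟩ : ↥{x : X | φ x ≤ v'})) := by
        intro v' hv'
        have hfin := aux_finite hφ hv'
        have hsubsets : {D : Set ↥{x : X | φ x ≤ v'} |
              ∃ q : ↥{x : X | φ x ≤ v'}, φ (q : X) ≤ u ∧ D = connectedComponent q} ⊆
            {D : Set ↥{x : X | φ x ≤ v'} |
              ∃ q : ↥{x : X | φ x ≤ v'}, φ (q : X) ≤ v ∧ D = connectedComponent q} := by
          rintro D ⟨q, hq, rfl⟩
          exact ⟨q, le_trans hq huv.le, rfl⟩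
        have hseteq := Set.eq_of_subset_of_ncard_le hsubsets
          (hsz v' hv').ge hfin
        have hmem : connectedComponent (⟨(p : X), le_trans p.2 hv'.le⟩ :
            ↥{x : X | φ x ≤ v'}) ∈ {D : Set ↥{x : X | φ x ≤ v'} |
              ∃ q : ↥{x : X | φ x ≤ v'}, φ (q : X) ≤ v ∧ D = connectedComponent q} :=
          ⟨⟨(p : X), le_trans p.2 hv'.le⟩, p.2, rfl⟩
        rw [← hseteq] at hmem
        obtain ⟨q, hqu, hqeq⟩ := hmem
        exact ⟨(q : X), hqu, ⟨q, hqeq ▸ mem_connectedComponent, rfl⟩⟩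
      obtain ⟨q, hqu, hqc⟩ := aux_limit hφ huv (p : X) p.2 hyp
      exact ⟨q, hqu, by simpa using hqc⟩
  exact ⟨iff2.trans iff3, iff2⟩
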